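/- Let a : ℕ → ℤ and let k be a positive integer such that |a(t+1) − a(t)| ≤ k for all t ∈ ℕ. Let i, i₁, p be natural numbers with i₁ ≤ i and i − i₁ < 2^p, and let x be an integer with k·2^p ≤ a(i) − x < k·2^(p+1). Then 0 < a(i₁) − x < 3·k·2^p. -/
import Mathlib

lemma lip (a : ℕ → ℤ) (k : ℤ) (hstep : ∀ t : ℕ, |a (t + 1) - a t| ≤ k) :
    ∀ n d : ℕ, |a (n + d) - a n| ≤ k * d := by
  intro n d
  induction d with
  | zero => simp
  | succ d ih =>
      have h1 := hstep (n + d)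
      calc |a (n + (d+1)) - a n|
          = |(a (n + d + 1) - a (n + d)) + (a (n + d) - a n)| := by
            ring_nf
      _ ≤ |a (n + d + 1) - a (n + d)| + |a (n + d) - a n| := abs_add_le _ _
      _ ≤ k + k * d := add_le_add h1 ih
      _ = k * (d + 1 : ℕ) := by push_cast; ring

/-- in the two-level structure, the offset `a i₁ - x` lies
strictly between `0` and `3·k·2^p`. -/
theorem stmt_9 (a : ℕ → ℤ) (k : ℤ) (hk : 0 < k)
    (hstep : ∀ t : ℕ, |a (t + 1) - a t| ≤ k)
    (i i₁ p : ℕ) (h₁ : i₁ ≤ i) (h₂ : i - i₁ < 2 ^ p)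
    (x : ℤ) (hx₁ : k * 2 ^ p ≤ a i - x) (hx₂ : a i - x < k * 2 ^ (p + 1)) :
    0 < a i₁ - x ∧ a i₁ - x < 3 * k * 2 ^ p := by
  obtain ⟨d, rfl⟩ := Nat.exists_eq_add_of_le h₁
  have hd : d < 2 ^ p := by omega
  have hlip := lip a k hstep i₁ d
  have hdle : (d : ℤ) ≤ 2 ^ p - 1 := by
    have : (d : ℤ) < (2 : ℤ) ^ p := by exact_mod_cast hd
    omega
  have hkd : k * d ≤ k * (2 ^ p - 1) :=
    mul_le_mul_of_nonneg_left hdle hk.le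
  have habs : |a (i₁ + d) - a i₁| ≤ k * (2 ^ p - 1) := hlip.trans hkd
  rw [abs_le] at habs
  have h2 : k * 2 ^ (p + 1) = 2 * (k * 2 ^ p) := by ring
  constructor <;> nlinarith [habs.1, habs.2, hk]
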